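/- Let Σ = {a, b}. For a word w ∈ Σ*, let N(w) denote the signed number of factorizations of w into factors from {a, b, ba}: N(w) = Σ (−1)^{#{i : uᵢ = ba}}, the sum ranging over all finite sequences (u₁, …, u_k) of words with each uᵢ ∈ {a, b, ba} and u₁u₂⋯u_k = w (the empty word has exactly the empty factorization, so N(λ) = 1). Then N(w) = 1 if w ∈ a*b* (i.e., w = aⁱbʲ for some i, j ≥ 0) and N(w) = 0 otherwise. -/

import Mathlib

/-- The two-letter alphabet `{a, b}`. -/
inductive AB : Type
  | a
  | b
deriving DecidableEq

open AB

/-- `N(w)`: the signed number of factorizations of `w` into factors from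
`{a, b, ba}`, a factorization counting with sign `(-1)^(number of `ba` factors)`. -/
noncomputable def signedFactorCount (w : List AB) : ℤ :=
  ∑ᶠ l ∈ {l : List (List AB) |
      (∀ u ∈ l, u = [a] ∨ u = [b] ∨ u = [b, a]) ∧ l.flatten = w},
    (-1 : ℤ) ^ (l.countP (fun u => u = [b, a]))

def Facts (w : List AB) : Set (List (List AB)) :=
  {l : List (List AB) |
      (∀ u ∈ l, u = [a] ∨ u = [b] ∨ u = [b, a]) ∧ l.flatten = w}

lemma signedFactorCount_eq (w : List AB) :
    signedFactorCount w = ∑ᶠ l ∈ Facts w, (-1 : ℤ) ^ (l.countP (fun u => u = [b, a])) := rfl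

lemma Facts_nil : Facts ([] : List AB) = {[]} := by
  ext l
  constructor
  · rintro ⟨h1, h2⟩
    rw [List.flatten_eq_nil_iff] at h2
    cases l with
    | nil => rfl
    | cons u l' =>
      have := h2 u (by simp)
      rcases h1 u (by simp) with h | h | h <;> simp [h] at this
  · rintro rfl
    exact ⟨by simp, by simp⟩

lemma Facts_a (t : List AB) : Facts (a :: t) = (List.cons [a]) '' Facts t := by
  ext l
  constructor
  · rintro ⟨h1, h2⟩
    cases l with
    | nil => simp at h2
    | cons u l' =>
      have hmem := fun v hv => h1 v (List.mem_cons_of_mem u hv)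
      rcases h1 u List.mem_cons_self with rfl | rfl | rfl <;> simp at h2
      exact ⟨l', ⟨hmem, h2⟩, rfl⟩
  · rintro ⟨l', ⟨h1, h2⟩, rfl⟩
    refine ⟨?_, by simp [h2]⟩
    intro u hu
    rcases List.mem_cons.mp hu with rfl | hu
    · exact Or.inl rfl
    · exact h1 u hu

lemma Facts_b (t : List AB) (ht : ∀ s, t ≠ a :: s) :
    Facts (b :: t) = (List.cons [b]) '' Facts t := by
  ext l
  constructor
  · rintro ⟨h1, h2⟩
    cases l with
    | nil => simp at h2
    | cons u l' =>
      have hmem := fun v hv => h1 v (List.mem_cons_of_mem u hv)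
      rcases h1 u List.mem_cons_self with rfl | rfl | rfl <;> simp at h2
      · exact ⟨l', ⟨hmem, h2⟩, rfl⟩
      · exact absurd h2.symm (ht _)
  · rintro ⟨l', ⟨h1, h2⟩, rfl⟩
    refine ⟨?_, by simp [h2]⟩
    intro u hu
    rcases List.mem_cons.mp hu with rfl | hu
    · exact Or.inr (Or.inl rfl)
    · exact h1 u hu

lemma Facts_ba (s : List AB) :
    Facts (b :: a :: s) =
      (List.cons [b]) '' Facts (a :: s) ∪ (List.cons [b, a]) '' Facts s := by
  ext l
  constructor
  · rintro ⟨h1, h2⟩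
    cases l with
    | nil => simp at h2
    | cons u l' =>
      have hmem := fun v hv => h1 v (List.mem_cons_of_mem u hv)
      rcases h1 u List.mem_cons_self with rfl | rfl | rfl <;> simp at h2
      · exact Or.inl ⟨l', ⟨hmem, h2⟩, rfl⟩
      · exact Or.inr ⟨l', ⟨hmem, h2⟩, rfl⟩
  · rintro (⟨l', ⟨h1, h2⟩, rfl⟩ | ⟨l', ⟨h1, h2⟩, rfl⟩) <;>
      refine ⟨?_, by simp [h2]⟩ <;> intro u hu <;>
      rcases List.mem_cons.mp hu with rfl | hu
    · exact Or.inr (Or.inl rfl)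
    · exact h1 u hu
    · exact Or.inr (Or.inr rfl)
    · exact h1 u hu

lemma Facts_finite : ∀ w : List AB, (Facts w).Finite := by
  have key : ∀ n, ∀ w : List AB, w.length ≤ n → (Facts w).Finite := by
    intro n
    induction n with
    | zero =>
      intro w hw
      rw [List.length_eq_zero_iff.mp (Nat.le_zero.mp hw), Facts_nil]
      exact Set.finite_singleton _
    | succ n ih =>
      intro w hw
      match w with
      | [] => rw [Facts_nil]; exact Set.finite_singleton _
      | a :: t =>
        rw [Facts_a]
        exact (ih t (by simpa using hw)).image _
      | b :: [] =>
        rw [Facts_b [] (by simp)]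
        exact ((ih [] (by simp)).image _)
      | b :: a :: s =>
        rw [Facts_ba]
        exact ((ih (a :: s) (by simpa using hw)).image _).union
          ((ih s (by simp at hw; omega)).image _)
      | b :: b :: s =>
        rw [Facts_b (b :: s) (by simp)]
        exact (ih (b :: s) (by simpa using hw)).image _
  exact fun w => key w.length w le_rfl

lemma cons_injOn (u : List AB) (S : Set (List (List AB))) :
    Set.InjOn (List.cons u) S := fun x _ y _ h => by simpa using h

lemma N_nil : signedFactorCount ([] : List AB) = 1 := by
  rw [signedFactorCount_eq, Facts_nil, finsum_mem_singleton]
  simp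

lemma N_a (t : List AB) : signedFactorCount (a :: t) = signedFactorCount t := by
  rw [signedFactorCount_eq, signedFactorCount_eq, Facts_a,
    finsum_mem_image (cons_injOn _ _)]
  apply finsum_mem_congr rfl
  intro l _
  simp [List.countP_cons]

lemma N_b (t : List AB) (ht : ∀ s, t ≠ a :: s) :
    signedFactorCount (b :: t) = signedFactorCount t := by
  rw [signedFactorCount_eq, signedFactorCount_eq, Facts_b t ht,
    finsum_mem_image (cons_injOn _ _)]
  apply finsum_mem_congr rfl
  intro l _
  simp [List.countP_cons]

lemma N_ba (s : List AB) : signedFactorCount (b :: a :: s) = 0 := by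
  have hdisj : Disjoint ((List.cons [b]) '' Facts (a :: s))
      ((List.cons [b, a]) '' Facts s) := by
    rw [Set.disjoint_left]
    rintro x ⟨l, _, rfl⟩ ⟨l', _, h⟩
    simp at h
  have hf1 : ((List.cons [b]) '' Facts (a :: s)).Finite :=
    (Facts_finite (a :: s)).image _
  have hf2 : ((List.cons [b, a]) '' Facts s).Finite :=
    (Facts_finite s).image _
  rw [signedFactorCount_eq, Facts_ba,
    finsum_mem_union hdisj hf1 hf2,
    finsum_mem_image (cons_injOn _ _), finsum_mem_image (cons_injOn _ _)]
  have h1 : ∑ᶠ l ∈ Facts (a :: s), (-1 : ℤ) ^ (([b] :: l).countP (fun u => u = [b, a]))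
      = signedFactorCount (a :: s) := by
    rw [signedFactorCount_eq]
    apply finsum_mem_congr rfl
    intro l _
    simp [List.countP_cons]
  have h2 : ∑ᶠ l ∈ Facts s, (-1 : ℤ) ^ (([b, a] :: l).countP (fun u => u = [b, a]))
      = - signedFactorCount s := by
    rw [signedFactorCount_eq, ← finsum_mem_neg_distrib _ (Facts_finite s)]
    apply finsum_mem_congr rfl
    intro l _
    simp [List.countP_cons, pow_succ]
  rw [h1, h2, N_a]
  ring

/-- Cartier–Foata identity `(a + b - ba)* = ` listing series of `a*b*`:
the signed number of factorizations of `w` into `{a, b, ba}` is `1` if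
`w ∈ a*b*` and `0` otherwise. -/
theorem cartier_foata_ab (w : List AB) :
    ((∃ i j : ℕ, w = List.replicate i a ++ List.replicate j b) →
      signedFactorCount w = 1) ∧
    (¬ (∃ i j : ℕ, w = List.replicate i a ++ List.replicate j b) →
      signedFactorCount w = 0) := by
  induction w with
  | nil =>
    refine ⟨fun _ => N_nil, fun h => absurd ⟨0, 0, rfl⟩ h⟩
  | cons x t ih =>
    cases x with
    | a =>
      have hequiv : (∃ i j : ℕ, a :: t = List.replicate i a ++ List.replicate j b) ↔
          (∃ i j : ℕ, t = List.replicate i a ++ List.replicate j b) := by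
        constructor
        · rintro ⟨i, j, h⟩
          cases i with
          | zero =>
            simp at h
            cases j with
            | zero => simp at h
            | succ j => simp [List.replicate_succ] at h
          | succ i =>
            rw [List.replicate_succ] at h
            exact ⟨i, j, by simpa using h⟩
        · rintro ⟨i, j, rfl⟩
          exact ⟨i + 1, j, by rw [List.replicate_succ]; rfl⟩
      rw [N_a]
      exact ⟨fun h => ih.1 (hequiv.mp h), fun h => ih.2 (fun h' => h (hequiv.mpr h'))⟩
    | b =>
      have hnota : ∀ (i j : ℕ) (s : List AB),
          b :: s = List.replicate i a ++ List.replicate j b →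
          ∃ j', s = List.replicate j' b := by
        intro i j s h
        cases i with
        | zero =>
          simp at h
          cases j with
          | zero => simp at h
          | succ j =>
            rw [List.replicate_succ] at h
            exact ⟨j, by simpa using h⟩
        | succ i => rw [List.replicate_succ] at h; simp at h
      match t with
      | [] =>
        refine ⟨fun _ => ?_, fun h => absurd ⟨0, 1, rfl⟩ h⟩
        rw [N_b [] (by simp), N_nil]
      | a :: s =>
        refine ⟨fun h => ?_, fun _ => N_ba s⟩
        obtain ⟨i, j, h⟩ := h
        obtain ⟨j', hj'⟩ := hnota i j _ h
        cases j' with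
        | zero => simp at hj'
        | succ j' => rw [List.replicate_succ] at hj'; simp at hj'
      | b :: s =>
        have hequiv : (∃ i j : ℕ, b :: b :: s = List.replicate i a ++ List.replicate j b) ↔
            (∃ i j : ℕ, b :: s = List.replicate i a ++ List.replicate j b) := by
          constructor
          · rintro ⟨i, j, h⟩
            obtain ⟨j', hj'⟩ := hnota i j _ h
            exact ⟨0, j', by simpa using hj'⟩
          · rintro ⟨i, j, h⟩
            obtain ⟨j', hj'⟩ := hnota i j _ h
            exact ⟨0, j' + 2, by simp [hj', List.replicate_succ]⟩
        rw [N_b (b :: s) (by simp)]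
        exact ⟨fun h => ih.1 (hequiv.mp h), fun h => ih.2 (fun h' => h (hequiv.mpr h'))⟩
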